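/- arXiv:1511.08023 — 2 statements merged into one kernel-verified Lean document; each statement's English description precedes it below -/
import Mathlib

section
/- The band element of a closed loop, defined as Band_k(γ) = (1/k!) Σ over partitions (k_1 ≤ ... ≤ k_m) of k of c(k_1,...,k_m) · Brac_{k_1}(γ)···Brac_{k_m}(γ), where c(k_1,...,k_m) is the number of permutations in S_k with cycle type (k_1,...,k_m), has Laurent polynomial x_{Band_k(γ)} = U_k(x_γ); equivalently the polynomial identity U_k(x) = (1/k!) Σ_{σ ∈ S_k} ∏_{cycles c of σ} T_{|c|}(x) holds in ℚ[x]. -/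
open Polynomial BigOperators

/-- Chebyshev polynomials of the first kind over `ℚ`:
`T 0 = 2`, `T 1 = X`, `T (k+2) = X * T (k+1) - T k`. -/
noncomputable def chebT : ℕ → Polynomial ℚ
  | 0 => 2
  | 1 => Polynomial.X
  | (k + 2) => Polynomial.X * chebT (k + 1) - chebT k

/-- Chebyshev polynomials of the second kind over `ℚ`:
`U 0 = 1`, `U 1 = X`, `U (k+2) = X * U (k+1) - U k`. -/
noncomputable def chebU : ℕ → Polynomial ℚ
  | 0 => 1
  | 1 => Polynomial.X
  | (k + 2) => Polynomial.X * chebU (k + 1) - chebU k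

open Finset Equiv

section Aux

lemma chebT_eval (q : ℚ) (hq : q ≠ 0) (n : ℕ) :
    (chebT n).eval (q + q⁻¹) = q ^ n + (q ^ n)⁻¹ := by
  induction n using Nat.strong_induction_on with
  | _ n ih =>
    match n with
    | 0 => norm_num [chebT]
    | 1 => simp [chebT]
    | (m+2) =>
      have h1 := ih (m+1) (by omega)
      have h0 := ih m (by omega)
      simp only [chebT, eval_sub, eval_mul, eval_X, h1, h0]
      have hqm : q ^ m ≠ 0 := pow_ne_zero _ hq
      field_simp
      ring

lemma chebU_eval (q : ℚ) (hq : q ≠ 0) (n : ℕ) :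
    (chebU n).eval (q + q⁻¹) = (∑ j ∈ range (n+1), (q^2)^j) / q ^ n := by
  induction n using Nat.strong_induction_on with
  | _ n ih =>
    match n with
    | 0 => simp [chebU]
    | 1 =>
      simp only [chebU, eval_X]
      rw [geom_sum_succ, geom_sum_one]
      field_simp
    | (m+2) =>
      have h1 := ih (m+1) (by omega)
      have h0 := ih m (by omega)
      simp only [chebU, eval_sub, eval_mul, eval_X, h1, h0]
      rw [show m+2+1 = (m+2)+1 from rfl, geom_sum_succ' (x := q^2) (n := m+2),
        geom_sum_succ' (x := q^2) (n := m+1)]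
      have hqm : q ^ m ≠ 0 := pow_ne_zero _ hq
      field_simp
      ring

variable {k : ℕ}

lemma card_stab (k : ℕ) (S : Finset (Fin k)) :
    (univ.filter (fun σ : Equiv.Perm (Fin k) => ∀ a, a ∈ S ↔ σ a ∈ S)).card
      = S.card.factorial * (k - S.card).factorial := by
  classical
  have e : (Perm {x : Fin k // x ∈ S} × Perm {x : Fin k // ¬ x ∈ S}) ≃
      {σ : Perm (Fin k) // ∀ a, a ∈ S ↔ σ a ∈ S} :=
  { toFun := fun p => ⟨p.1.subtypeCongr p.2, by
      intro a
      by_cases h : a ∈ S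
      · rw [Perm.subtypeCongr.left_apply _ _ h]
        simpa [h] using (p.1 ⟨a, h⟩).2
      · rw [Perm.subtypeCongr.right_apply _ _ h]
        simpa [h] using (p.2 ⟨a, h⟩).2⟩
    invFun := fun σ => (σ.1.subtypePerm (fun a => (σ.2 a).symm), σ.1.subtypePerm (fun a => not_iff_not.mpr (σ.2 a).symm))
    left_inv := by
      rintro ⟨p1, p2⟩
      refine Prod.ext ?_ ?_ <;> ext x <;>
        simp only [Perm.subtypePerm_apply]
      · rw [Perm.subtypeCongr.left_apply _ _ x.2]
      · rw [Perm.subtypeCongr.right_apply _ _ x.2]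
    right_inv := by
      rintro ⟨σ, hσ⟩
      ext a
      simp only [Perm.subtypeCongr.apply]
      by_cases h : a ∈ S <;> simp [h]
      }
  have := Fintype.card_congr e
  rw [Fintype.card_prod, Fintype.card_perm, Fintype.card_perm, Fintype.card_coe,
    Fintype.card_subtype_compl, Fintype.card_coe, Fintype.card_fin] at this
  rw [← Fintype.card_subtype, ← this]

lemma inv_iff_of_closed (σ : Equiv.Perm (Fin k)) (S : Finset (Fin k))
    (h : ∀ a ∈ S, σ a ∈ S) : ∀ a, a ∈ S ↔ σ a ∈ S := by
  have himg : S.image σ = S := by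
    apply Finset.eq_of_subset_of_card_le
    · intro b hb
      obtain ⟨a, ha, rfl⟩ := Finset.mem_image.mp hb
      exact h a ha
    · rw [Finset.card_image_of_injective _ σ.injective]
  intro a
  refine ⟨h a, fun hb => ?_⟩
  rw [← himg] at hb
  obtain ⟨c, hc, hce⟩ := Finset.mem_image.mp hb
  rwa [← σ.injective hce]

lemma pow_mem_of_closed (σ : Equiv.Perm (Fin k)) (S : Finset (Fin k))
    (h : ∀ a, a ∈ S ↔ σ a ∈ S) (a : Fin k) (ha : a ∈ S) (n : ℕ) : (σ ^ n) a ∈ S := by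
  induction n with
  | zero => simpa using ha
  | succ n ih => rw [pow_succ', Equiv.Perm.mul_apply]; exact (h _).mp ih

lemma expand (σ : Equiv.Perm (Fin k)) (y : ℚ) :
    (y + 1) ^ (k - σ.support.card) *
        ∏ c ∈ σ.cycleFactorsFinset, (y ^ c.support.card + 1)
      = ∑ S ∈ univ.filter (fun S : Finset (Fin k) => ∀ a, a ∈ S ↔ σ a ∈ S),
          y ^ S.card := by
  classical
  have hdisj := Equiv.Perm.cycleFactorsFinset_pairwise_disjoint σ
  have h1 : (y + 1) ^ (k - σ.support.card)
      = ∑ F ∈ σ.supportᶜ.powerset, y ^ F.card := by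
    have hc : σ.supportᶜ.card = k - σ.support.card := by
      rw [Finset.card_compl, Fintype.card_fin]
    rw [← hc, ← Finset.prod_const (b := y + 1) (s := σ.supportᶜ),
      Finset.prod_add (fun _ => y) (fun _ => 1)]
    simp [Finset.prod_const]
  have h2 : (∏ c ∈ σ.cycleFactorsFinset, (y ^ c.support.card + 1))
      = ∑ T ∈ σ.cycleFactorsFinset.powerset, ∏ c ∈ T, y ^ c.support.card := by
    rw [Finset.prod_add (fun c : Equiv.Perm (Fin k) => y ^ c.support.card) (fun _ => 1)]
    simp
  rw [h1, h2, Finset.sum_mul_sum, ← Finset.sum_product']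
  refine Finset.sum_bij' (i := fun p _ => p.1 ∪ p.2.biUnion Equiv.Perm.support)
    (j := fun S _ => (S \ σ.support, σ.cycleFactorsFinset.filter (fun c => c.support ⊆ S)))
    ?_ ?_ ?_ ?_ ?_
  · rintro ⟨F, T⟩ hp
    simp only [Finset.mem_product, Finset.mem_powerset] at hp
    obtain ⟨hF, hT⟩ := hp
    rw [Finset.mem_filter]
    refine ⟨Finset.mem_univ _, inv_iff_of_closed _ _ ?_⟩
    intro a ha
    rcases Finset.mem_union.mp ha with ha | ha
    · have : σ a = a := by
        have := hF ha
        simpa [Equiv.Perm.mem_support] using Finset.mem_compl.mp this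
      rw [this]; exact Finset.mem_union_left _ ha
    · obtain ⟨c, hcT, hac⟩ := Finset.mem_biUnion.mp ha
      have hcf := hT hcT
      have hca : c a = σ a := (Equiv.Perm.mem_cycleFactorsFinset_iff.mp hcf).2 a hac
      have : σ a ∈ c.support := by
        rw [← hca]; exact Equiv.Perm.apply_mem_support.mpr hac
      exact Finset.mem_union_right _ (Finset.mem_biUnion.mpr ⟨c, hcT, this⟩)
  · intro S hS
    simp only [Finset.mem_product, Finset.mem_powerset]
    refine ⟨?_, Finset.filter_subset _ _⟩
    intro a ha
    rw [Finset.mem_compl]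
    exact (Finset.mem_sdiff.mp ha).2
  · rintro ⟨F, T⟩ hp
    simp only [Finset.mem_product, Finset.mem_powerset] at hp
    obtain ⟨hF, hT⟩ := hp
    have hFs : ∀ a ∈ F, a ∉ σ.support := fun a ha => Finset.mem_compl.mp (hF ha)
    have hTs : ∀ c ∈ T, c.support ⊆ σ.support := fun c hc =>
      Equiv.Perm.mem_cycleFactorsFinset_support_le (hT hc)
    have hB : (T.biUnion Equiv.Perm.support) ⊆ σ.support := by
      intro a ha
      obtain ⟨c, hc, hac⟩ := Finset.mem_biUnion.mp ha
      exact hTs c hc hac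
    refine Prod.ext ?_ ?_
    · ext a
      simp only [Finset.mem_sdiff, Finset.mem_union]
      constructor
      · rintro ⟨ha | ha, hns⟩
        · exact ha
        · exact absurd (hB ha) hns
      · intro ha
        exact ⟨Or.inl ha, hFs a ha⟩
    · ext c
      simp only [Finset.mem_filter]
      constructor
      · rintro ⟨hcf, hsub⟩
        obtain ⟨a, hac⟩ := (Equiv.Perm.mem_cycleFactorsFinset_iff.mp hcf).1.nonempty_support
        have hacs : a ∈ c.support := hac
        have haB : a ∈ T.biUnion Equiv.Perm.support := by
          rcases Finset.mem_union.mp (hsub hacs) with h | h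
          · exact absurd (Equiv.Perm.mem_cycleFactorsFinset_support_le hcf hacs) (hFs a h)
          · exact h
        obtain ⟨c', hc'T, hac'⟩ := Finset.mem_biUnion.mp haB
        have : c = c' := by
          by_contra hne
          have := hdisj (hcf) (hT hc'T) hne
          rw [Equiv.Perm.disjoint_iff_disjoint_support] at this
          exact (Finset.disjoint_left.mp this) hacs hac'
        rwa [this]
      · intro hcT
        refine ⟨hT hcT, ?_⟩
        intro a ha
        exact Finset.mem_union_right _ (Finset.mem_biUnion.mpr ⟨c, hcT, ha⟩)
  · intro S hS
    have hinv := (Finset.mem_filter.mp hS).2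
    ext a
    simp only [Finset.mem_union, Finset.mem_sdiff, Finset.mem_biUnion, Finset.mem_filter]
    constructor
    · rintro (⟨ha, _⟩ | ⟨c, ⟨hcf, hsub⟩, hac⟩)
      · exact ha
      · exact hsub hac
    · intro ha
      by_cases hs : a ∈ σ.support
      · refine Or.inr ⟨σ.cycleOf a, ⟨Equiv.Perm.cycleOf_mem_cycleFactorsFinset_iff.mpr hs, ?_⟩, ?_⟩
        · intro b hb
          rw [Equiv.Perm.mem_support_cycleOf_iff] at hb
          obtain ⟨hsc, _⟩ := hb
          obtain ⟨i, _, hi⟩ := hsc.exists_pow_eq'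
          rw [← hi]
          exact pow_mem_of_closed σ S hinv a ha i
        · rw [Equiv.Perm.mem_support_cycleOf_iff]
          exact ⟨Equiv.Perm.SameCycle.refl _ _, hs⟩
      · exact Or.inl ⟨ha, hs⟩
  · rintro ⟨F, T⟩ hp
    simp only [Finset.mem_product, Finset.mem_powerset] at hp
    obtain ⟨hF, hT⟩ := hp
    have hdT : ∀ c ∈ T, ∀ c' ∈ T, c ≠ c' → Disjoint c.support c'.support := by
      intro c hc c' hc' hne
      have := hdisj (hT hc) (hT hc') hne
      rwa [Equiv.Perm.disjoint_iff_disjoint_support] at this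
    have hcard : (F ∪ T.biUnion Equiv.Perm.support).card
        = F.card + ∑ c ∈ T, c.support.card := by
      have hdFB : Disjoint F (T.biUnion Equiv.Perm.support) := by
        rw [Finset.disjoint_left]
        intro a haF haB
        obtain ⟨c, hc, hac⟩ := Finset.mem_biUnion.mp haB
        exact (Finset.mem_compl.mp (hF haF))
          (Equiv.Perm.mem_cycleFactorsFinset_support_le (hT hc) hac)
      rw [Finset.card_union_of_disjoint hdFB, Finset.card_biUnion hdT]
    rw [hcard, pow_add, Finset.prod_pow_eq_pow_sum]

lemma comb (q : ℚ) (hq : q ≠ 0) :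
    ∑ σ : Equiv.Perm (Fin k),
        (q + q⁻¹) ^ (k - σ.support.card) *
          (σ.cycleType.map (fun ℓ => q ^ ℓ + (q ^ ℓ)⁻¹)).prod
      = (k.factorial : ℚ) * ((∑ j ∈ range (k+1), (q^2)^j) / q ^ k) := by
  classical
  have hterm : ∀ σ : Equiv.Perm (Fin k),
      (q + q⁻¹) ^ (k - σ.support.card) *
          (σ.cycleType.map (fun ℓ => q ^ ℓ + (q ^ ℓ)⁻¹)).prod
        = (∑ S ∈ univ.filter (fun S : Finset (Fin k) => ∀ a, a ∈ S ↔ σ a ∈ S),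
            (q^2) ^ S.card) / q ^ k := by
    intro σ
    have hprod : (σ.cycleType.map (fun ℓ => q ^ ℓ + (q ^ ℓ)⁻¹)).prod
        = ∏ c ∈ σ.cycleFactorsFinset, (q ^ c.support.card + (q ^ c.support.card)⁻¹) := by
      rw [Equiv.Perm.cycleType_def, Multiset.map_map]
      rfl
    have hsum : ∑ c ∈ σ.cycleFactorsFinset, c.support.card = σ.support.card := by
      rw [← σ.sum_cycleType, Equiv.Perm.cycleType_def]
      rfl
    have hs_le : σ.support.card ≤ k := by
      simpa using Finset.card_le_univ σ.support
    rw [hprod, ← expand σ (q^2)]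
    have e0 : q + q⁻¹ = (q^2 + 1) / q := by field_simp
    have e1 : ∀ c ∈ σ.cycleFactorsFinset,
        q ^ c.support.card + (q ^ c.support.card)⁻¹
          = ((q^2) ^ c.support.card + 1) / q ^ c.support.card := by
      intro c _
      have h2 : q ^ c.support.card ≠ 0 := pow_ne_zero _ hq
      field_simp
      ring
    rw [e0, Finset.prod_congr rfl e1, div_pow, Finset.prod_div_distrib,
      Finset.prod_pow_eq_pow_sum, hsum]
    rw [div_mul_div_comm, ← pow_add, Nat.sub_add_cancel hs_le]
  rw [Finset.sum_congr rfl (fun σ _ => hterm σ), ← Finset.sum_div]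
  have hswap : ∑ σ : Equiv.Perm (Fin k),
      ∑ S ∈ univ.filter (fun S : Finset (Fin k) => ∀ a, a ∈ S ↔ σ a ∈ S), (q^2) ^ S.card
      = ∑ S : Finset (Fin k),
          ((univ.filter (fun σ : Equiv.Perm (Fin k) => ∀ a, a ∈ S ↔ σ a ∈ S)).card : ℚ)
            * (q^2) ^ S.card := by
    simp_rw [Finset.sum_filter]
    rw [Finset.sum_comm]
    refine Finset.sum_congr rfl fun S _ => ?_
    rw [← Finset.sum_filter, Finset.sum_const, nsmul_eq_mul]
  rw [hswap]
  have hc : ∀ S : Finset (Fin k),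
      ((univ.filter (fun σ : Equiv.Perm (Fin k) => ∀ a, a ∈ S ↔ σ a ∈ S)).card : ℚ)
          * (q^2) ^ S.card
        = ((S.card.factorial * (k - S.card).factorial : ℕ) : ℚ) * (q^2) ^ S.card := by
    intro S
    rw [card_stab]
  rw [Finset.sum_congr rfl fun S _ => hc S]
  have huniv : (Finset.univ : Finset (Finset (Fin k)))
      = (Finset.univ : Finset (Fin k)).powerset := (Finset.powerset_univ).symm
  rw [huniv, Finset.sum_powerset_apply_card
    (f := fun m => ((m.factorial * (k - m).factorial : ℕ) : ℚ) * (q^2) ^ m)]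
  rw [Finset.card_univ, Fintype.card_fin, ← mul_div_assoc, Finset.mul_sum]
  congr 1
  refine Finset.sum_congr rfl fun m hm => ?_
  have hm' : m ≤ k := by
    have := Finset.mem_range.mp hm; omega
  rw [nsmul_eq_mul, ← mul_assoc, ← Nat.cast_mul, ← mul_assoc,
    Nat.choose_mul_factorial_mul_factorial hm']

end Aux

/-- The band polynomial identity
`U_k(x) = (1/k!) Σ_{σ ∈ S_k} ∏_{cycles c of σ} T_{|c|}(x)` in `ℚ[x]`:
each permutation contributes `x^{#fixed points}` (since `T_1 = x`) times the
product of `T_{ℓ}` over its nontrivial cycle lengths `ℓ` (its cycle type). -/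
theorem band_eq_chebU (k : ℕ) :
    (k.factorial : Polynomial ℚ) * chebU k =
      ∑ σ : Equiv.Perm (Fin k),
        Polynomial.X ^ (k - σ.support.card) * (σ.cycleType.map chebT).prod := by
  classical
  apply Polynomial.eq_of_infinite_eval_eq
  have hinj : Set.InjOn (fun q : ℚ => q + q⁻¹) (Set.Ioi 1) := by
    have hmono : StrictMonoOn (fun q : ℚ => q + q⁻¹) (Set.Ioi 1) := by
      intro x hx y hy hxy
      simp only [Set.mem_Ioi] at hx hy
      have hx0 : (0:ℚ) < x := by linarith
      have hy0 : (0:ℚ) < y := by linarith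
      have key : (y + y⁻¹) - (x + x⁻¹) = (y - x) * (x*y - 1) / (x*y) := by
        field_simp
        ring
      have hpos : (0:ℚ) < (y - x) * (x*y - 1) / (x*y) := by
        apply div_pos
        · apply mul_pos
          · linarith
          · nlinarith
        · positivity
      simp only
      linarith [key ▸ hpos]
    exact hmono.injOn
  have himg : ((fun q : ℚ => q + q⁻¹) '' (Set.Ioi 1)).Infinite :=
    Set.Infinite.image hinj (Set.Ioi_infinite 1)
  apply himg.mono
  rintro x ⟨q, hq1, rfl⟩
  simp only [Set.mem_Ioi] at hq1
  have hq : q ≠ 0 := by intro h; rw [h] at hq1; norm_num at hq1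
  simp only [Set.mem_setOf_eq]
  rw [eval_finset_sum]
  have hterm : ∀ σ : Equiv.Perm (Fin k),
      (Polynomial.X ^ (k - σ.support.card) * (σ.cycleType.map chebT).prod).eval (q + q⁻¹)
        = (q + q⁻¹) ^ (k - σ.support.card) *
            (σ.cycleType.map (fun ℓ => q ^ ℓ + (q ^ ℓ)⁻¹)).prod := by
    intro σ
    rw [eval_mul, eval_pow, eval_X, eval_multiset_prod, Multiset.map_map]
    congr 2
    exact Multiset.map_congr rfl fun ℓ _ => chebT_eval q hq ℓ
  rw [Finset.sum_congr rfl fun σ _ => hterm σ, comb q hq,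
    eval_mul, eval_natCast, chebU_eval q hq]
end

section
/- Leading-term linear independence: let A be the ring of Laurent polynomials in variables x_1,...,x_n, y_1,...,y_n over ℤ, graded by ℤ^n with deg(x_i)=e_i and deg(y_j)=−b_j for fixed vectors b_j. Suppose a family (f_g)_{g ∈ G}, G ⊆ ℤ^n, is such that each f_g has a unique term x^g not divisible by any y_j, and every other term of f_g has exponent vector of the form g + (non-negative integer combination of the columns of the extended matrix B̃). If the columns of the coefficient part of B̃ are the standard basis vectors (principal coefficients), then the family (f_g) is ℤ-linearly independent. -/
open BigOperators

/-- Leading-term linear independence. Work in the Laurent polynomial ring in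
variables `x₁,…,xₙ,y₁,…,yₙ` over `ℤ`, modelled as finitely supported functions
on the group of exponent vectors `(x-exponents, y-exponents)`. Let `B̃` be the
extended exchange matrix with top part `B` and principal coefficients (bottom
part the identity), so that its `j`-th column has x-part the `j`-th column of
`B` and y-part the standard basis vector `e_j`. Suppose each `f i` has the term
`x^{g i}` (y-free, i.e. y-exponent `0`) in its support, and every term of
`f i` has exponent vector `g i` plus a non-negative integer combination `m` of
the columns of `B̃`. If the `g i` are pairwise distinct, then the family `f` is
`ℤ`-linearly independent. -/
theorem leading_term_linear_independent {n : ℕ} {ι : Type*}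
    (B : Matrix (Fin n) (Fin n) ℤ)
    (g : ι → (Fin n → ℤ)) (hg : Function.Injective g)
    (f : ι → ((Fin n → ℤ) × (Fin n → ℤ)) →₀ ℤ)
    (h1 : ∀ i, (g i, (0 : Fin n → ℤ)) ∈ (f i).support)
    (h2 : ∀ i, ∀ p ∈ (f i).support, ∃ m : Fin n → ℕ,
      p.2 = (fun j => (m j : ℤ)) ∧
      p.1 = g i + ∑ j, (m j : ℤ) • (fun l => B l j)) :
    LinearIndependent ℤ f := by
  rw [linearIndependent_iff']
  intro s c hsum i hi
  have key : ∀ i', i' ≠ i → (f i') (g i, 0) = 0 := by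
    intro i' hne
    by_contra h
    obtain ⟨m, hm1, hm2⟩ := h2 i' _ (Finsupp.mem_support_iff.2 h)
    have hm0 : ∀ j, (m j : ℤ) = 0 := by
      intro j
      have := congrFun hm1 j
      simpa using this.symm
    have hgg : g i = g i' := by
      funext l
      have := congrFun hm2 l
      simpa [hm0] using this
    exact hne (hg hgg.symm)
  have h0 := DFunLike.congr_fun hsum (g i, (0 : Fin n → ℤ))
  simp only [Finsupp.coe_finset_sum, Finset.sum_apply, Finsupp.coe_smul,
    Pi.smul_apply, smul_eq_mul, Finsupp.coe_zero, Pi.zero_apply] at h0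
  rw [Finset.sum_eq_single i (fun i' _ hne => by rw [key i' hne, mul_zero])
    (fun h => absurd hi h)] at h0
  have hfne : (f i) (g i, (0 : Fin n → ℤ)) ≠ 0 := Finsupp.mem_support_iff.1 (h1 i)
  exact (mul_eq_zero.1 h0).resolve_right hfne
end
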